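/- Let A be a congruence-distributive algebra and θ ∈ Con(A). Then the map FC(θ) : FC(A) → FC(A/θ) defined by FC(θ)(ψ) = (ψ ∨ θ)/θ is well defined and is a morphism of Boolean algebras (it preserves Δ, ∇, joins, meets, and hence complements). -/

import Mathlib

/-! Universal-algebra framework: algebras over a signature, congruences,
factor congruences, lifting properties. -/

structure Signature where
  ops : Type
  arity : ops → ℕ

structure Alg (σ : Signature) where
  carrier : Type
  interp : ∀ f : σ.ops, (Fin (σ.arity f) → carrier) → carrier

namespace Alg

variable {σ : Signature}

/-- A congruence: an equivalence relation compatible with all operations. -/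
def IsCon (A : Alg σ) (r : A.carrier → A.carrier → Prop) : Prop :=
  Equivalence r ∧
    ∀ (f : σ.ops) (x y : Fin (σ.arity f) → A.carrier),
      (∀ i, r (x i) (y i)) → r (A.interp f x) (A.interp f y)

/-- The least congruence `Δ_A`. -/
def delta (A : Alg σ) : A.carrier → A.carrier → Prop := fun a b => a = b

/-- The greatest congruence `∇_A = A²`. -/
def nabla (A : Alg σ) : A.carrier → A.carrier → Prop := fun _ _ => True

/-- Meet (intersection) of congruences. -/
def conMeet (A : Alg σ) (r s : A.carrier → A.carrier → Prop) :
    A.carrier → A.carrier → Prop := fun a b => r a b ∧ s a b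

/-- Join of congruences: the least congruence containing both. -/
def conJoin (A : Alg σ) (r s : A.carrier → A.carrier → Prop) :
    A.carrier → A.carrier → Prop := fun a b =>
  ∀ t, A.IsCon t → (∀ x y, r x y → t x y) → (∀ x y, s x y → t x y) → t a b

/-- The congruence generated by a set of pairs. -/
def conGen (A : Alg σ) (X : Set (A.carrier × A.carrier)) :
    A.carrier → A.carrier → Prop := fun a b =>
  ∀ t, A.IsCon t → (∀ p ∈ X, t p.1 p.2) → t a b

/-- Composition of relations: `(a,b) ∈ comp r s` iff `(a,x) ∈ s` and `(x,b) ∈ r`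
for some `x`. -/
def comp (A : Alg σ) (r s : A.carrier → A.carrier → Prop) :
    A.carrier → A.carrier → Prop := fun a b => ∃ x, s a x ∧ r x b

/-- Factor congruences: congruences `φ` having a congruence `φ*` with
`φ ∨ φ* = ∇`, `φ ∩ φ* = Δ` and `φ ∘ φ* = φ* ∘ φ`. -/
def IsFC (A : Alg σ) (φ : A.carrier → A.carrier → Prop) : Prop :=
  A.IsCon φ ∧ ∃ ψ, A.IsCon ψ ∧ A.conJoin φ ψ = A.nabla ∧
    A.conMeet φ ψ = A.delta ∧ A.comp φ ψ = A.comp ψ φ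

/-- Boolean congruences: complemented elements of the lattice `Con(A)`. -/
def IsBooleanCon (A : Alg σ) (φ : A.carrier → A.carrier → Prop) : Prop :=
  A.IsCon φ ∧ ∃ ψ, A.IsCon ψ ∧ A.conJoin φ ψ = A.nabla ∧ A.conMeet φ ψ = A.delta

/-- `A` is congruence-distributive iff the lattice `Con(A)` is distributive. -/
def CongDistrib (A : Alg σ) : Prop :=
  ∀ r s t, A.IsCon r → A.IsCon s → A.IsCon t →
    A.conMeet r (A.conJoin s t) = A.conJoin (A.conMeet r s) (A.conMeet r t)

/-- `A` is congruence-permutable iff all congruences permute under composition. -/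
def CongPermutable (A : Alg σ) : Prop :=
  ∀ r s, A.IsCon r → A.IsCon s → A.comp r s = A.comp s r

/-- Arithmetical = congruence-distributive + congruence-permutable. -/
def Arithmetical (A : Alg σ) : Prop := A.CongDistrib ∧ A.CongPermutable

/-- The quotient algebra `A/θ`. -/
noncomputable def quotAlg (A : Alg σ) (θ : A.carrier → A.carrier → Prop) :
    Alg σ where
  carrier := Quot θ
  interp f x := Quot.mk θ (A.interp f fun i => (x i).out)

/-- The image `α/θ = {(a/θ, b/θ) : (a,b) ∈ α}` of a relation in the quotient. -/
def quotRel (A : Alg σ) (θ α : A.carrier → A.carrier → Prop) :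
    Quot θ → Quot θ → Prop := fun x y =>
  ∃ a b, x = Quot.mk θ a ∧ y = Quot.mk θ b ∧ α a b

/-- `θ` has the Factor Congruence Lifting Property: the Boolean morphism
`FC(θ) : FC(A) → FC(A/θ)`, `ψ ↦ (ψ ∨ θ)/θ`, is surjective. -/
def HasFCLP (A : Alg σ) (θ : A.carrier → A.carrier → Prop) : Prop :=
  ∀ γ, (A.quotAlg θ).IsFC γ →
    ∃ ψ, A.IsFC ψ ∧ A.quotRel θ (A.conJoin ψ θ) = γ

/-- `θ` has the Congruence Boolean Lifting Property: the Boolean morphism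
`B(Con(A)) → B(Con(A/θ))`, `ψ ↦ (ψ ∨ θ)/θ`, is surjective. -/
def HasCBLP (A : Alg σ) (θ : A.carrier → A.carrier → Prop) : Prop :=
  ∀ γ, (A.quotAlg θ).IsBooleanCon γ →
    ∃ ψ, A.IsBooleanCon ψ ∧ A.quotRel θ (A.conJoin ψ θ) = γ

/-- `A` has FCLP iff every congruence of `A` has FCLP. -/
def AlgFCLP (A : Alg σ) : Prop := ∀ θ, A.IsCon θ → A.HasFCLP θ

/-- `A` has CBLP iff every congruence of `A` has CBLP. -/
def AlgCBLP (A : Alg σ) : Prop := ∀ θ, A.IsCon θ → A.HasCBLP θ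

/-- FC-normality. -/
def FCNormal (A : Alg σ) : Prop :=
  ∀ φ ψ, A.IsCon φ → A.IsCon ψ → A.comp φ ψ = A.nabla →
    ∃ α β, A.IsFC α ∧ A.IsFC β ∧ A.conMeet α β = A.delta ∧
      A.comp φ α = A.nabla ∧ A.comp ψ β = A.nabla

/-- B-normality. -/
def BNormal (A : Alg σ) : Prop :=
  ∀ φ ψ, A.IsCon φ → A.IsCon ψ → A.conJoin φ ψ = A.nabla →
    ∃ α β, A.IsBooleanCon α ∧ A.IsBooleanCon β ∧ A.conMeet α β = A.delta ∧
      A.conJoin φ α = A.nabla ∧ A.conJoin ψ β = A.nabla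

/-- Isomorphism of algebras. -/
def Iso (A B : Alg σ) : Prop :=
  ∃ e : A.carrier ≃ B.carrier,
    ∀ (f : σ.ops) (x : Fin (σ.arity f) → A.carrier),
      e (A.interp f x) = B.interp f fun i => e (x i)

/-- Direct product of a finite family of algebras. -/
def prodAlg {n : ℕ} (B : Fin n → Alg σ) : Alg σ where
  carrier := ∀ i, (B i).carrier
  interp f x := fun i => (B i).interp f fun j => x j i

/-- The product congruence `θ₁ × … × θₙ`. -/
def prodRel {n : ℕ} (B : Fin n → Alg σ)
    (θ : ∀ i, (B i).carrier → (B i).carrier → Prop) :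
    (prodAlg B).carrier → (prodAlg B).carrier → Prop :=
  fun x y => ∀ i, θ i (x i) (y i)

/-- Maximal congruences: maximal elements of `(Con(A) \ {∇}, ⊆)`. -/
def IsMaxCon (A : Alg σ) (θ : A.carrier → A.carrier → Prop) : Prop :=
  A.IsCon θ ∧ θ ≠ A.nabla ∧
    ∀ ψ, A.IsCon ψ → ψ ≠ A.nabla → (∀ a b, θ a b → ψ a b) → ψ = θ

/-- Prime congruences. -/
def IsPrimeCon (A : Alg σ) (θ : A.carrier → A.carrier → Prop) : Prop :=
  A.IsCon θ ∧ ∀ α β, A.IsCon α → A.IsCon β →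
    (∀ a b, α a b → β a b → θ a b) →
    (∀ a b, α a b → θ a b) ∨ ∀ a b, β a b → θ a b

end Alg


/-! Auxiliary lemmas. -/

namespace Alg

variable {σ : Signature} {A : Alg σ}

theorem relext {X : Type} {r s : X → X → Prop}
    (h1 : ∀ a b, r a b → s a b) (h2 : ∀ a b, s a b → r a b) : r = s := by
  funext a b; exact propext ⟨h1 a b, h2 a b⟩

section
variable {θ ψ χ α β : A.carrier → A.carrier → Prop}

theorem mk_eq_iff (hθ : A.IsCon θ) {a b : A.carrier} :
    Quot.mk θ a = Quot.mk θ b ↔ θ a b :=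
  ⟨fun h => hθ.1.eqvGen_iff.mp (Quot.eqvGen_exact h), Quot.sound⟩

theorem le_conJoin_left : ∀ a b, α a b → A.conJoin α β a b :=
  fun a b h _t _ h1 _ => h1 a b h

theorem le_conJoin_right : ∀ a b, β a b → A.conJoin α β a b :=
  fun a b h _t _ _ h2 => h2 a b h

theorem conJoin_le {t : A.carrier → A.carrier → Prop} (ht : A.IsCon t)
    (h1 : ∀ a b, α a b → t a b) (h2 : ∀ a b, β a b → t a b) :
    ∀ a b, A.conJoin α β a b → t a b :=
  fun _ _ h => h t ht h1 h2

theorem conJoin_isCon : A.IsCon (A.conJoin α β) := by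
  refine ⟨⟨?_, ?_, ?_⟩, ?_⟩
  · intro a t ht _ _; exact ht.1.refl a
  · intro a b h t ht h1 h2; exact ht.1.symm (h t ht h1 h2)
  · intro a b c hab hbc t ht h1 h2; exact ht.1.trans (hab t ht h1 h2) (hbc t ht h1 h2)
  · intro f x y h t ht h1 h2; exact ht.2 f x y (fun i => h i t ht h1 h2)

theorem conMeet_isCon (hα : A.IsCon α) (hβ : A.IsCon β) : A.IsCon (A.conMeet α β) := by
  refine ⟨⟨?_, ?_, ?_⟩, ?_⟩
  · exact fun a => ⟨hα.1.refl a, hβ.1.refl a⟩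
  · exact fun h => ⟨hα.1.symm h.1, hβ.1.symm h.2⟩
  · exact fun h h' => ⟨hα.1.trans h.1 h'.1, hβ.1.trans h.2 h'.2⟩
  · exact fun f x y h => ⟨hα.2 f x y fun i => (h i).1, hβ.2 f x y fun i => (h i).2⟩

theorem out_rel (hθ : A.IsCon θ) (a : A.carrier) : θ (Quot.mk θ a).out a :=
  (mk_eq_iff hθ).mp (Quot.out_eq _)

theorem quotRel_mk (hθ : A.IsCon θ) (hα : A.IsCon α)
    (hle : ∀ a b, θ a b → α a b) {a b : A.carrier} :
    A.quotRel θ α (Quot.mk θ a) (Quot.mk θ b) ↔ α a b := by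
  constructor
  · rintro ⟨a', b', ha, hb, hab⟩
    exact hα.1.trans (hle _ _ ((mk_eq_iff hθ).mp ha))
      (hα.1.trans hab (hα.1.symm (hle _ _ ((mk_eq_iff hθ).mp hb))))
  · exact fun h => ⟨a, b, rfl, rfl, h⟩

theorem quotRel_out (hθ : A.IsCon θ) (hα : A.IsCon α)
    (hle : ∀ a b, θ a b → α a b) {x y : Quot θ} :
    A.quotRel θ α x y ↔ α x.out y.out := by
  conv_lhs => rw [← Quot.out_eq x, ← Quot.out_eq y]
  exact quotRel_mk hθ hα hle

theorem quot_interp (hθ : A.IsCon θ) (f : σ.ops) (x : Fin (σ.arity f) → A.carrier) :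
    (A.quotAlg θ).interp f (fun i => Quot.mk θ (x i)) = Quot.mk θ (A.interp f x) := by
  show Quot.mk θ (A.interp f fun i => (Quot.mk θ (x i)).out) = _
  exact Quot.sound (hθ.2 f _ _ fun i => out_rel hθ (x i))

theorem quotRel_isCon (hθ : A.IsCon θ) (hα : A.IsCon α)
    (hle : ∀ a b, θ a b → α a b) : (A.quotAlg θ).IsCon (A.quotRel θ α) := by
  refine ⟨⟨?_, ?_, ?_⟩, ?_⟩
  · intro x; exact ⟨x.out, x.out, (Quot.out_eq x).symm, (Quot.out_eq x).symm, hα.1.refl _⟩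
  · rintro x y ⟨a, b, ha, hb, hab⟩; exact ⟨b, a, hb, ha, hα.1.symm hab⟩
  · intro x y z hxy hyz
    replace hxy := (quotRel_out hθ hα hle).mp hxy
    replace hyz := (quotRel_out hθ hα hle).mp hyz
    refine (quotRel_out hθ hα hle).mpr ?_
    exact hα.1.trans hxy hyz
  · intro f x y h
    exact ⟨_, _, rfl, rfl, hα.2 f _ _ fun i => (quotRel_out hθ hα hle).mp (h i)⟩

theorem quotRel_join (hθ : A.IsCon θ) (hα : A.IsCon α) (hβ : A.IsCon β)
    (hleα : ∀ a b, θ a b → α a b) :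
    A.quotRel θ (A.conJoin α β) =
      (A.quotAlg θ).conJoin (A.quotRel θ α) (A.quotRel θ β) := by
  apply relext
  · rintro x y ⟨a, b, ha, hb, hab⟩ t ht h1 h2
    subst ha; subst hb
    have hT : A.IsCon (fun c d => t (Quot.mk θ c) (Quot.mk θ d)) := by
      refine ⟨⟨fun c => ht.1.refl _, fun h => ht.1.symm h, fun h h' => ht.1.trans h h'⟩, ?_⟩
      intro f u v h
      have hc := ht.2 f (fun i => Quot.mk θ (u i)) (fun i => Quot.mk θ (v i)) h
      rwa [quot_interp hθ, quot_interp hθ] at hc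
    exact hab _ hT (fun c d h => h1 _ _ ⟨c, d, rfl, rfl, h⟩)
      (fun c d h => h2 _ _ ⟨c, d, rfl, rfl, h⟩)
  · intro x y h
    refine h _ (quotRel_isCon hθ conJoin_isCon
        (fun a b hh => le_conJoin_left a b (hleα a b hh))) ?_ ?_
    · rintro u v ⟨a, b, ha, hb, hab⟩; exact ⟨a, b, ha, hb, le_conJoin_left a b hab⟩
    · rintro u v ⟨a, b, ha, hb, hab⟩; exact ⟨a, b, ha, hb, le_conJoin_right a b hab⟩

theorem quotRel_meet (hθ : A.IsCon θ) (hα : A.IsCon α) (hβ : A.IsCon β)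
    (hleα : ∀ a b, θ a b → α a b) (hleβ : ∀ a b, θ a b → β a b) :
    A.quotRel θ (A.conMeet α β) =
      (A.quotAlg θ).conMeet (A.quotRel θ α) (A.quotRel θ β) := by
  apply relext
  · rintro x y ⟨a, b, ha, hb, hab⟩
    exact ⟨⟨a, b, ha, hb, hab.1⟩, ⟨a, b, ha, hb, hab.2⟩⟩
  · rintro x y ⟨h1, h2⟩
    rw [quotRel_out hθ hα hleα] at h1
    rw [quotRel_out hθ hβ hleβ] at h2
    exact ⟨x.out, y.out, (Quot.out_eq x).symm, (Quot.out_eq y).symm, h1, h2⟩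

theorem join_meet_distrib (hcd : A.CongDistrib) (hψ : A.IsCon ψ) (hχ : A.IsCon χ)
    (hθ : A.IsCon θ) :
    A.conJoin (A.conMeet ψ χ) θ =
      A.conMeet (A.conJoin ψ θ) (A.conJoin χ θ) := by
  apply relext
  · intro a b h
    constructor
    · exact conJoin_le conJoin_isCon (fun c d hh => le_conJoin_left c d hh.1)
        le_conJoin_right a b h
    · exact conJoin_le conJoin_isCon (fun c d hh => le_conJoin_left c d hh.2)
        le_conJoin_right a b h
  · rintro a b ⟨h1, h2⟩
    have e1 := hcd (A.conJoin ψ θ) χ θ conJoin_isCon hχ hθ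
    have hm : A.conMeet (A.conJoin ψ θ) (A.conJoin χ θ) a b := ⟨h1, h2⟩
    rw [e1] at hm
    refine conJoin_le conJoin_isCon ?_
      (fun c d h => le_conJoin_right c d h.2) a b hm
    intro c d h
    have e2 := hcd χ ψ θ hχ hψ hθ
    have hm2 : A.conMeet χ (A.conJoin ψ θ) c d := ⟨h.2, h.1⟩
    rw [e2] at hm2
    exact conJoin_le conJoin_isCon
      (fun u v hv => le_conJoin_left u v ⟨hv.2, hv.1⟩)
      (fun u v hv => le_conJoin_right u v hv.2) c d hm2

theorem conJoin_join_dist :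
    A.conJoin (A.conJoin ψ χ) θ = A.conJoin (A.conJoin ψ θ) (A.conJoin χ θ) := by
  apply relext
  · refine conJoin_le conJoin_isCon ?_ ?_
    · refine conJoin_le conJoin_isCon ?_ ?_
      · exact fun a b h => le_conJoin_left a b (le_conJoin_left a b h)
      · exact fun a b h => le_conJoin_right a b (le_conJoin_left a b h)
    · exact fun a b h => le_conJoin_left a b (le_conJoin_right a b h)
  · refine conJoin_le conJoin_isCon ?_ ?_
    · refine conJoin_le conJoin_isCon ?_ ?_
      · exact fun a b h => le_conJoin_left a b (le_conJoin_left a b h)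
      · exact fun a b h => le_conJoin_right a b h
    · refine conJoin_le conJoin_isCon ?_ ?_
      · exact fun a b h => le_conJoin_left a b (le_conJoin_right a b h)
      · exact fun a b h => le_conJoin_right a b h

theorem conJoin_delta (hθ : A.IsCon θ) : A.conJoin A.delta θ = θ := by
  apply relext
  · exact conJoin_le hθ (fun a b h => h ▸ hθ.1.refl a) (fun _ _ h => h)
  · exact le_conJoin_right

theorem conJoin_nabla : A.conJoin A.nabla θ = A.nabla := by
  apply relext
  · exact fun _ _ _ => trivial
  · exact fun a b _ => le_conJoin_left a b trivial

theorem quotRel_self (hθ : A.IsCon θ) : A.quotRel θ θ = (A.quotAlg θ).delta := by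
  apply relext
  · rintro x y ⟨a, b, ha, hb, hab⟩
    show x = y
    rw [ha, hb]; exact Quot.sound hab
  · intro x y h
    exact ⟨x.out, y.out, (Quot.out_eq x).symm, (Quot.out_eq y).symm,
      (mk_eq_iff hθ).mp (by rw [Quot.out_eq, Quot.out_eq]; exact h)⟩

theorem quotRel_nabla : A.quotRel θ A.nabla = (A.quotAlg θ).nabla := by
  apply relext
  · exact fun _ _ _ => trivial
  · exact fun x y _ => ⟨x.out, y.out, (Quot.out_eq x).symm, (Quot.out_eq y).symm, trivial⟩

theorem comp_eq_nabla (hψ : A.IsCon ψ) (hχ : A.IsCon χ)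
    (hJ : A.conJoin ψ χ = A.nabla) (hC : A.comp ψ χ = A.comp χ ψ) :
    A.comp ψ χ = A.nabla := by
  have hcon : A.IsCon (A.comp ψ χ) := by
    refine ⟨⟨?_, ?_, ?_⟩, ?_⟩
    · exact fun a => ⟨a, hχ.1.refl a, hψ.1.refl a⟩
    · rintro a b ⟨x, h1, h2⟩
      show A.comp ψ χ b a
      rw [hC]
      exact ⟨x, hψ.1.symm h2, hχ.1.symm h1⟩
    · rintro a b c ⟨x, hx1, hx2⟩ ⟨y, hy1, hy2⟩
      have h : A.comp χ ψ x y := ⟨b, hx2, hy1⟩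
      rw [← hC] at h
      obtain ⟨z, hz1, hz2⟩ := h
      exact ⟨z, hχ.1.trans hx1 hz1, hψ.1.trans hz2 hy2⟩
    · intro f x y h
      choose w h1 h2 using h
      exact ⟨A.interp f w, hχ.2 f x w h1, hψ.2 f w y h2⟩
  apply relext
  · exact fun _ _ _ => trivial
  · intro a b _
    have h : A.conJoin ψ χ a b := by rw [hJ]; trivial
    exact h _ hcon (fun c d hh => ⟨c, hχ.1.refl c, hh⟩)
      (fun c d hh => ⟨d, hh, hψ.1.refl d⟩)

theorem quot_comp_nabla (hθ : A.IsCon θ) (hn : A.comp ψ χ = A.nabla) :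
    (A.quotAlg θ).comp (A.quotRel θ (A.conJoin ψ θ)) (A.quotRel θ (A.conJoin χ θ)) =
      (A.quotAlg θ).nabla := by
  apply relext
  · exact fun _ _ _ => trivial
  · intro x y _
    have h : A.comp ψ χ x.out y.out := by rw [hn]; trivial
    obtain ⟨z, hz1, hz2⟩ := h
    exact ⟨Quot.mk θ z,
      ⟨x.out, z, (Quot.out_eq x).symm, rfl, le_conJoin_left _ _ hz1⟩,
      ⟨z, y.out, rfl, (Quot.out_eq y).symm, le_conJoin_left _ _ hz2⟩⟩

end

end Alg

/-- `FC(θ) : FC(A) → FC(A/θ)`, `ψ ↦ (ψ ∨ θ)/θ`, is well defined and is a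
morphism of Boolean algebras: it preserves `Δ`, `∇`, joins and meets. -/
theorem stmt_2 {σ : Signature} (A : Alg σ) (hne : Nonempty A.carrier)
    (hcd : A.CongDistrib) (θ : A.carrier → A.carrier → Prop)
    (hθ : A.IsCon θ) :
    (∀ ψ, A.IsFC ψ → (A.quotAlg θ).IsFC (A.quotRel θ (A.conJoin ψ θ))) ∧
    A.quotRel θ (A.conJoin A.delta θ) = (A.quotAlg θ).delta ∧
    A.quotRel θ (A.conJoin A.nabla θ) = (A.quotAlg θ).nabla ∧
    (∀ ψ χ, A.IsFC ψ → A.IsFC χ →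
      A.quotRel θ (A.conJoin (A.conJoin ψ χ) θ) =
        (A.quotAlg θ).conJoin (A.quotRel θ (A.conJoin ψ θ))
          (A.quotRel θ (A.conJoin χ θ))) ∧
    (∀ ψ χ, A.IsFC ψ → A.IsFC χ →
      A.quotRel θ (A.conJoin (A.conMeet ψ χ) θ) =
        (A.quotAlg θ).conMeet (A.quotRel θ (A.conJoin ψ θ))
          (A.quotRel θ (A.conJoin χ θ))) := by
  have hle : ∀ (ψ : A.carrier → A.carrier → Prop), ∀ a b, θ a b → A.conJoin ψ θ a b :=
    fun ψ a b h => Alg.le_conJoin_right a b h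
  refine ⟨?_, ?_, ?_, ?_, ?_⟩
  · rintro ψ ⟨hψ, ψs, hψs, hJ, hM, hC⟩
    refine ⟨Alg.quotRel_isCon hθ Alg.conJoin_isCon (hle ψ), A.quotRel θ (A.conJoin ψs θ),
      Alg.quotRel_isCon hθ Alg.conJoin_isCon (hle ψs), ?_, ?_, ?_⟩
    · rw [← Alg.quotRel_join hθ Alg.conJoin_isCon Alg.conJoin_isCon (hle ψ),
        ← Alg.conJoin_join_dist, hJ, Alg.conJoin_nabla, Alg.quotRel_nabla]
    · rw [← Alg.quotRel_meet hθ Alg.conJoin_isCon Alg.conJoin_isCon (hle ψ) (hle ψs),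
        ← Alg.join_meet_distrib hcd hψ hψs hθ, hM, Alg.conJoin_delta hθ,
        Alg.quotRel_self hθ]
    · have h1 := Alg.comp_eq_nabla hψ hψs hJ hC
      have h2 : A.comp ψs ψ = A.nabla := by rw [← hC]; exact h1
      rw [Alg.quot_comp_nabla hθ h1, Alg.quot_comp_nabla hθ h2]
  · rw [Alg.conJoin_delta hθ, Alg.quotRel_self hθ]
  · rw [Alg.conJoin_nabla, Alg.quotRel_nabla]
  · intro ψ χ hψ hχ
    rw [Alg.conJoin_join_dist,
      Alg.quotRel_join hθ Alg.conJoin_isCon Alg.conJoin_isCon (hle ψ)]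
  · intro ψ χ hψ hχ
    rw [Alg.join_meet_distrib hcd hψ.1 hχ.1 hθ,
      Alg.quotRel_meet hθ Alg.conJoin_isCon Alg.conJoin_isCon (hle ψ) (hle χ)]
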